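/- Let E ⊆ ℝ^ℓ be a convex set contained in an affine hyperplane {v : u·v = 1} for some linear functional u on ℝ^ℓ, and let ē ∈ ℝ^ℓ. If f : Fin n → ℝ^ℓ is an extreme point of M_n(E,ē) and there exist p : Fin n → ℝ and e : Fin n → ℝ^ℓ with p y > 0, e y an extreme point of E, and f y = p y • e y for all y, then the number of outcomes satisfies n ≤ ℓ. -/

import Mathlib

open Matrix Finset

/-- The set of `n`-outcome measurements with normalized effects in `E` and unit
effect `ebar`. -/
def Measurements {ℓ : ℕ} (n : ℕ) (E : Set (Fin ℓ → ℝ)) (ebar : Fin ℓ → ℝ) :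
    Set (Fin n → Fin ℓ → ℝ) :=
  {f | (∀ y, ∃ t : ℝ, 0 ≤ t ∧ ∃ c ∈ E, f y = t • c) ∧ ∑ y, f y = ebar}

/-- Davies' bound for GPTs: an extremal measurement whose
effects are positive multiples of extreme points of `E` has at most `ℓ`
outcomes, where `ℓ` is the linear dimension of the system. -/
theorem outcomes_le_linear_dimension
    {ℓ n : ℕ} (E : Set (Fin ℓ → ℝ)) (hE : Convex ℝ E)
    (u : (Fin ℓ → ℝ) →ₗ[ℝ] ℝ) (hu : ∀ v ∈ E, u v = 1)
    (ebar : Fin ℓ → ℝ) (f : Fin n → Fin ℓ → ℝ)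
    (hext : f ∈ Set.extremePoints ℝ (Measurements n E ebar))
    (p : Fin n → ℝ) (e : Fin n → Fin ℓ → ℝ)
    (hp : ∀ y, 0 < p y)
    (he : ∀ y, e y ∈ Set.extremePoints ℝ E)
    (hf : ∀ y, f y = p y • e y) :
    n ≤ ℓ := by
  by_contra hn
  push_neg at hn
  -- The vectors f y are linearly dependent
  have hdep : ¬ LinearIndependent ℝ f := by
    intro h
    have := h.fintype_card_le_finrank
    simp [Module.finrank_fintype_fun_eq_card] at this
    omega
  rw [Fintype.not_linearIndependent_iff] at hdep
  obtain ⟨c, hc0, y₀, hy₀⟩ := hdep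
  set ε : ℝ := (∑ y, |c y| + 1)⁻¹ with hε
  have hsnn : 0 ≤ ∑ y, |c y| := Finset.sum_nonneg fun _ _ => abs_nonneg _
  have hεpos : 0 < ε := by positivity
  have hbound : ∀ y, ε * |c y| ≤ 1 := by
    intro y
    have h1 : |c y| ≤ ∑ z, |c z| + 1 := by
      have := Finset.single_le_sum (f := fun z => |c z|) (fun _ _ => abs_nonneg _)
        (Finset.mem_univ y)
      linarith
    calc ε * |c y| ≤ ε * (∑ z, |c z| + 1) :=
          mul_le_mul_of_nonneg_left h1 hεpos.le
      _ = 1 := by rw [hε]; field_simp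
  have hnn : ∀ (s : ℝ) (y : Fin n), s = 1 ∨ s = -1 → 0 ≤ 1 + s * ε * c y := by
    intro s y hs
    have h1 := hbound y
    have h2 : |s * ε * c y| ≤ 1 := by
      rcases hs with hs | hs <;> rw [hs] <;>
        simpa [abs_mul, abs_of_pos hεpos] using h1
    have := neg_abs_le (s * ε * c y)
    linarith
  have hmemE : ∀ y, e y ∈ E := fun y => (he y).1
  obtain ⟨hfm, hfs⟩ := hext.1
  -- the two perturbed measurements
  have hmem : ∀ s : ℝ, s = 1 ∨ s = -1 →
      (fun y => (1 + s * ε * c y) • f y) ∈ Measurements n E ebar := by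
    intro s hs
    constructor
    · intro y
      refine ⟨(1 + s * ε * c y) * p y, mul_nonneg (hnn s y hs) (hp y).le, e y,
        hmemE y, ?_⟩
      dsimp only
      rw [hf y, smul_smul]
    · have : ∑ y, (1 + s * ε * c y) • f y
          = (∑ y, f y) + (s * ε) • ∑ y, c y • f y := by
        rw [Finset.smul_sum, ← Finset.sum_add_distrib]
        congr 1; ext y
        rw [add_smul, one_smul, smul_smul]
      rw [this, hc0, smul_zero, add_zero, hfs]
  have hg1 := hmem 1 (Or.inl rfl)
  have hg2 := hmem (-1) (Or.inr rfl)
  have hseg : f ∈ openSegment ℝ (fun y => (1 + 1 * ε * c y) • f y)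
      (fun y => (1 + (-1) * ε * c y) • f y) := by
    refine ⟨1/2, 1/2, by norm_num, by norm_num, by norm_num, ?_⟩
    ext y
    simp only [Pi.add_apply, Pi.smul_apply, smul_smul]
    rw [← add_smul]
    ring_nf
  have heq := hext.2 hg1 hg2 hseg
  have h0 : (ε * c y₀) • f y₀ = 0 := by
    have := congrFun heq y₀
    have h := this
    simp only [one_mul] at h
    have : (1 + ε * c y₀) • f y₀ - f y₀ = 0 := by rw [h]; simp
    rwa [add_smul, one_smul, add_sub_cancel_left] at this
  have hfne : f y₀ ≠ 0 := by
    intro h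
    have : u (f y₀) = 0 := by rw [h]; simp
    rw [hf y₀, LinearMap.map_smul, hu _ (hmemE y₀), smul_eq_mul, mul_one] at this
    exact (hp y₀).ne' this
  rcases smul_eq_zero.mp h0 with h | h
  · rcases mul_eq_zero.mp h with h | h
    · exact hεpos.ne' h
    · exact hy₀ h
  · exact hfne h
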